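/- Let X and Y be locally compact Hausdorff topological spaces. Then every ℂ-algebra isomorphism Φ : C₀(X, ℂ) → C₀(Y, ℂ) is an isometry with respect to the supremum norms, i.e. ‖Φ f‖ = ‖f‖ for all f ∈ C₀(X, ℂ). -/
import Mathlib


open ZeroAtInfty

set_option maxHeartbeats 1000000

/-- For locally compact Hausdorff spaces `X` and `Y`, every `ℂ`-algebra isomorphism
(i.e. bijective `ℂ`-linear ring isomorphism) `Φ : C₀(X, ℂ) → C₀(Y, ℂ)` is an isometry
with respect to the supremum norms: `‖Φ f‖ = ‖f‖` for all `f`. -/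
theorem c0_alg_iso_isometry
    (X Y : Type*) [TopologicalSpace X] [LocallyCompactSpace X] [T2Space X]
    [TopologicalSpace Y] [LocallyCompactSpace Y] [T2Space Y]
    (Φ : C₀(X, ℂ) ≃+* C₀(Y, ℂ)) (hΦ : ∀ (c : ℂ) (f : C₀(X, ℂ)), Φ (c • f) = c • Φ f)
    (f : C₀(X, ℂ)) : ‖Φ f‖ = ‖f‖ := by
  have hΦ' : ∀ (c : ℂ) (g : C₀(Y, ℂ)), Φ.symm (c • g) = c • Φ.symm g := by
    intro c g
    apply Φ.injective
    rw [Φ.apply_symm_apply, hΦ, Φ.apply_symm_apply]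
  let φ : C₀(X, ℂ) →ₙₐ[ℂ] C₀(Y, ℂ) :=
    { toFun := Φ, map_add' := map_add Φ, map_mul' := map_mul Φ,
      map_smul' := fun c x => hΦ c x, map_zero' := map_zero Φ }
  let ψ : C₀(Y, ℂ) →ₙₐ[ℂ] C₀(X, ℂ) :=
    { toFun := Φ.symm, map_add' := map_add Φ.symm, map_mul' := map_mul Φ.symm,
      map_smul' := fun c x => hΦ' c x, map_zero' := map_zero Φ.symm }
  let Φ' : Unitization ℂ C₀(X, ℂ) →ₐ[ℂ] Unitization ℂ C₀(Y, ℂ) :=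
    Unitization.lift ((Unitization.inrNonUnitalAlgHom ℂ C₀(Y, ℂ)).comp φ)
  let Ψ' : Unitization ℂ C₀(Y, ℂ) →ₐ[ℂ] Unitization ℂ C₀(X, ℂ) :=
    Unitization.lift ((Unitization.inrNonUnitalAlgHom ℂ C₀(X, ℂ)).comp ψ)
  have h1 : Φ'.comp Ψ' = AlgHom.id ℂ (Unitization ℂ C₀(Y, ℂ)) := by
    apply Unitization.algHom_ext''
    intro b
    simp [Φ', Ψ', φ, ψ]
  have h2 : Ψ'.comp Φ' = AlgHom.id ℂ (Unitization ℂ C₀(X, ℂ)) := by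
    apply Unitization.algHom_ext''
    intro a
    simp [Φ', Ψ', φ, ψ]
  let e : Unitization ℂ C₀(X, ℂ) ≃ₐ[ℂ] Unitization ℂ C₀(Y, ℂ) := AlgEquiv.ofAlgHom Φ' Ψ' h1 h2
  have he : e (f : Unitization ℂ C₀(X, ℂ)) = ((Φ f : C₀(Y, ℂ)) : Unitization ℂ C₀(Y, ℂ)) := by
    simp [e, Φ', φ]
  have hspec : spectrum ℂ ((Φ f : C₀(Y, ℂ)) : Unitization ℂ C₀(Y, ℂ))
      = spectrum ℂ (f : Unitization ℂ C₀(X, ℂ)) := by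
    rw [← he, AlgEquiv.spectrum_eq]
  have key : (‖((Φ f : C₀(Y, ℂ)) : Unitization ℂ C₀(Y, ℂ))‖₊ : ENNReal)
      = (‖(f : Unitization ℂ C₀(X, ℂ))‖₊ : ENNReal) := by
    rw [← IsStarNormal.spectralRadius_eq_nnnorm, ← IsStarNormal.spectralRadius_eq_nnnorm,
      spectralRadius, spectralRadius, hspec]
  rw [← Unitization.norm_inr (𝕜 := ℂ) (Φ f), ← Unitization.norm_inr (𝕜 := ℂ) f]
  rw [← coe_nnnorm, ← coe_nnnorm]
  exact_mod_cast key
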